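/- arXiv:2212.13003 — 2 statements merged into one kernel-verified Lean document; each statement's English description precedes it below -/
import Mathlib

section
/- For all integers m ≥ 0, n ≥ 2 and t with 1 ≤ t ≤ m + n − 2, the K_{1,t}-structure connectivity of the DCell network satisfies κ(D_{m,n}; K_{1,t}) ≤ ⌈(n−1)/(1+t)⌉ + m. -/
open SimpleGraph

/-! ## Structure connectivity -/

/-- The set of vertices covered by a family of subgraphs of `G`. -/
def SimpleGraph.cutVerts {V : Type*} {G : SimpleGraph V} (F : Finset G.Subgraph) : Set V :=
  ⋃ A ∈ F, A.verts

/-- A family `F` of subgraphs of `G` is a subgraph cut if deleting all vertices of members of `F`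
leaves a graph that is disconnected or has at most one vertex. -/
def SimpleGraph.IsSubgraphCut {V : Type*} (G : SimpleGraph V) (F : Finset G.Subgraph) : Prop :=
  ¬ (G.induce (SimpleGraph.cutVerts F)ᶜ).Connected ∨ ((SimpleGraph.cutVerts F)ᶜ : Set V).Subsingleton

/-- An `H`-structure cut of `G`: a subgraph cut all of whose members are isomorphic to `H`. -/
def SimpleGraph.IsStructureCut {V W : Type*} (G : SimpleGraph V) (H : SimpleGraph W)
    (F : Finset G.Subgraph) : Prop :=
  G.IsSubgraphCut F ∧ ∀ A ∈ F, Nonempty (A.coe ≃g H)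

/-- An `H`-substructure cut of `G`: a subgraph cut all of whose members are isomorphic to a
connected subgraph of `H`. -/
def SimpleGraph.IsSubstructureCut {V W : Type*} (G : SimpleGraph V) (H : SimpleGraph W)
    (F : Finset G.Subgraph) : Prop :=
  G.IsSubgraphCut F ∧ ∀ A ∈ F, ∃ K : H.Subgraph, K.Connected ∧ Nonempty (A.coe ≃g K.coe)

/-- The `H`-structure connectivity `κ(G; H)`. -/
noncomputable def SimpleGraph.structConn {V W : Type*} (G : SimpleGraph V) (H : SimpleGraph W) : ℕ :=
  sInf {k | ∃ F : Finset G.Subgraph, G.IsStructureCut H F ∧ F.card = k}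

/-- The `H`-substructure connectivity `κˢ(G; H)`. -/
noncomputable def SimpleGraph.substructConn {V W : Type*} (G : SimpleGraph V) (H : SimpleGraph W) : ℕ :=
  sInf {k | ∃ F : Finset G.Subgraph, G.IsSubstructureCut H F ∧ F.card = k}

/-- The star `K_{1,t}` with center `0` and `t` leaves. -/
def starGraph (t : ℕ) : SimpleGraph (Fin (t + 1)) :=
  SimpleGraph.fromRel (fun i _ => i = 0)
/-! ## The DCell network -/

/-- `tcell n m` is the number of servers of the `m`-dimensional DCell with `n`-port switches. -/
def tcell (n : ℕ) : ℕ → ℕ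
  | 0 => n
  | m + 1 => tcell n m * (tcell n m + 1)

/-- Vertices (labels `x_m x_{m-1} … x_0`) of the `m`-dimensional DCell with `n`-port switches. -/
def DCellVertex (n : ℕ) : ℕ → Type
  | 0 => Fin n
  | m + 1 => Fin (tcell n m + 1) × DCellVertex n m

/-- The numerical identifier `x_0 + Σ_{j=1}^{m} x_j · t_{j-1,n}` of a vertex of `D_{m,n}`. -/
def DCellCode (n : ℕ) : (m : ℕ) → DCellVertex n m → ℕ
  | 0, x => Fin.val x
  | m + 1, x => DCellCode n m x.2 + (Fin.val x.1) * tcell n m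

/-- The `m`-dimensional DCell with `n`-port switches `D_{m,n}`. -/
def DCell (n : ℕ) : (m : ℕ) → SimpleGraph (DCellVertex n m)
  | 0 => (⊤ : SimpleGraph (Fin n))
  | m + 1 => SimpleGraph.fromRel (fun u v =>
      (u.1 = v.1 ∧ (DCell n m).Adj u.2 v.2) ∨
      ((u.1 : ℕ) < (v.1 : ℕ) ∧ (u.1 : ℕ) = DCellCode n m v.2 ∧
        (v.1 : ℕ) = DCellCode n m u.2 + 1))

/-! ## Auxiliary constructions for the proof -/


section Star
variable {V : Type*} (G : SimpleGraph V)

/-- A star-shaped subgraph of `G` with center `c` and leaves `L k`. -/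
def starSub (c : V) {t : ℕ} (L : Fin t → V) (hL : ∀ k, G.Adj c (L k)) : G.Subgraph where
  verts := insert c (Set.range L)
  Adj u w := (u = c ∧ ∃ k, L k = w) ∨ (w = c ∧ ∃ k, L k = u)
  adj_sub := by
    rintro u w (⟨rfl, k, rfl⟩ | ⟨rfl, k, rfl⟩)
    · exact hL k
    · exact (hL k).symm
  edge_vert := by
    rintro u w (⟨rfl, k, rfl⟩ | ⟨rfl, k, hk⟩)
    · exact Set.mem_insert _ _
    · exact Set.mem_insert_iff.2 (Or.inr ⟨k, hk⟩)
  symm := by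
    refine ⟨?_⟩
    rintro u w (h | h)
    · exact Or.inr h
    · exact Or.inl h

theorem starSub_verts (c : V) {t : ℕ} (L : Fin t → V) (hL : ∀ k, G.Adj c (L k)) :
    (starSub G c L hL).verts = insert c (Set.range L) := rfl

theorem starSub_iso (c : V) {t : ℕ} (L : Fin t → V) (hL : ∀ k, G.Adj c (L k))
    (hinj : Function.Injective L) (hc : ∀ k, L k ≠ c) :
    Nonempty ((starSub G c L hL).coe ≃g _root_.starGraph t) := by
  have hmemc : c ∈ (starSub G c L hL).verts := Set.mem_insert _ _
  have hmemL : ∀ k, L k ∈ (starSub G c L hL).verts := fun k =>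
    Set.mem_insert_iff.2 (Or.inr ⟨k, rfl⟩)
  let f : Fin (t+1) → (starSub G c L hL).verts :=
    fun i => Fin.cases ⟨c, hmemc⟩ (fun k => ⟨L k, hmemL k⟩) i
  have hbij : Function.Bijective f := by
    constructor
    · intro a b hab
      induction a using Fin.cases with
      | zero =>
        induction b using Fin.cases with
        | zero => rfl
        | succ k => exact absurd (congrArg Subtype.val hab).symm (hc k)
      | succ k =>
        induction b using Fin.cases with
        | zero => exact absurd (congrArg Subtype.val hab) (hc k)
        | succ k' => exact congrArg Fin.succ (hinj (congrArg Subtype.val hab))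
    · rintro ⟨v, hv⟩
      rcases Set.mem_insert_iff.1 hv with rfl | ⟨k, rfl⟩
      · exact ⟨0, rfl⟩
      · exact ⟨Fin.succ k, rfl⟩
  refine ⟨RelIso.symm ⟨Equiv.ofBijective f hbij, @fun a b => ?_⟩⟩
  show (starSub G c L hL).coe.Adj (f a) (f b) ↔ (_root_.starGraph t).Adj a b
  have hadj : ∀ a b, (starSub G c L hL).coe.Adj a b ↔
      ((a : V) = c ∧ ∃ k, L k = (b : V)) ∨ ((b : V) = c ∧ ∃ k, L k = (a : V)) := by
    intro a b; rfl
  induction a using Fin.cases with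
  | zero =>
    induction b using Fin.cases with
    | zero =>
      simp only [hadj, _root_.starGraph, fromRel_adj]
      constructor
      · rintro (⟨-, k, hk⟩ | ⟨-, k, hk⟩) <;> exact absurd hk (hc k)
      · rintro ⟨h, -⟩; exact absurd rfl h
    | succ k =>
      simp only [hadj, _root_.starGraph, fromRel_adj]
      constructor
      · rintro -; exact ⟨(Fin.succ_ne_zero k).symm, Or.inl trivial⟩
      · rintro -; exact Or.inl ⟨rfl, k, rfl⟩
  | succ k =>
    induction b using Fin.cases with
    | zero =>
      simp only [hadj, _root_.starGraph, fromRel_adj]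
      constructor
      · rintro -; exact ⟨Fin.succ_ne_zero k, Or.inr trivial⟩
      · rintro -; exact Or.inr ⟨rfl, k, rfl⟩
    | succ k' =>
      simp only [hadj, _root_.starGraph, fromRel_adj]
      constructor
      · rintro (⟨hk, -⟩ | ⟨hk, -⟩) <;> exact absurd hk (hc _)
      · rintro ⟨-, h | h⟩ <;> exact absurd h (Fin.succ_ne_zero _)

end Star

/-! ### Basic facts about `tcell` -/

theorem two_le_tcell (N : ℕ) : ∀ m, N + 2 ≤ tcell (N + 2) m
  | 0 => le_refl _
  | m + 1 => by
    have h := two_le_tcell N m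
    calc N + 2 ≤ tcell (N+2) m := h
    _ ≤ tcell (N+2) m * (tcell (N+2) m + 1) := Nat.le_mul_of_pos_right _ (by omega)
    _ = tcell (N+2) (m+1) := rfl

theorem tcell_lt_succ (N m : ℕ) : tcell (N+2) m < tcell (N+2) (m+1) := by
  have h := two_le_tcell N m
  show tcell (N+2) m < tcell (N+2) m * (tcell (N+2) m + 1)
  nlinarith

theorem tcell_mono (N : ℕ) {a b : ℕ} (h : a ≤ b) : tcell (N+2) a ≤ tcell (N+2) b := by
  induction b with
  | zero => simpa [Nat.le_zero.1 h] using le_refl _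
  | succ b ih =>
    rcases Nat.lt_or_ge a (b+1) with h' | h'
    · exact le_trans (ih (by omega)) (le_of_lt (tcell_lt_succ N b))
    · have : a = b + 1 := by omega
      subst this; exact le_refl _

theorem tcell_strict (N : ℕ) {a b : ℕ} (h : a < b) : tcell (N+2) a < tcell (N+2) b :=
  lt_of_lt_of_le (tcell_lt_succ N a) (tcell_mono N h)

/-! ### Coordinate-wise construction of vertices -/

/-- Bound for coordinate `l` of a vertex of `D_{m,N+2}`. -/
def dB (N : ℕ) : ℕ → ℕ
  | 0 => N + 2
  | l + 1 => tcell (N+2) l + 1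

theorem dB_pos (N l : ℕ) : 0 < dB N l := by
  cases l <;> simp [dB] <;> omega

/-- The vertex of `D_{m,N+2}` whose coordinate `l` is `f l` (mod the bound). -/
def mkV (N : ℕ) (f : ℕ → ℕ) : (m : ℕ) → DCellVertex (N+2) m
  | 0 => ⟨f 0 % (N+2), Nat.mod_lt _ (by omega)⟩
  | m + 1 => (⟨f (m+1) % (tcell (N+2) m + 1), Nat.mod_lt _ (by omega)⟩, mkV N f m)

/-- Coordinate `l` of a vertex. -/
def coordV (N : ℕ) : (m : ℕ) → DCellVertex (N+2) m → ℕ → ℕ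
  | 0, x, l => if l = 0 then Fin.val x else 0
  | m + 1, x, l => if l = m + 1 then Fin.val x.1 else coordV N m x.2 l

theorem coordV_mkV (N : ℕ) (f : ℕ → ℕ) : ∀ (m l : ℕ), l ≤ m → f l < dB N l →
    coordV N m (mkV N f m) l = f l
  | 0, l, hl, hb => by
    interval_cases l
    simp only [coordV, mkV, if_pos rfl]
    exact Nat.mod_eq_of_lt hb
  | m + 1, l, hl, hb => by
    rcases Nat.eq_or_lt_of_le hl with rfl | hl'
    · simp only [coordV, mkV, if_pos rfl]
      exact Nat.mod_eq_of_lt (by simpa [dB] using hb)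
    · have hlm : l ≤ m := by omega
      have hne : l ≠ m + 1 := by omega
      simp only [coordV, mkV, if_neg hne]
      exact coordV_mkV N f m l hlm hb

theorem mkV_ne (N : ℕ) {f g : ℕ → ℕ} {m l : ℕ} (hl : l ≤ m) (hf : f l < dB N l)
    (hg : g l < dB N l) (hne : f l ≠ g l) : mkV N f m ≠ mkV N g m := by
  intro h
  apply hne
  have h2 := congrArg (fun v => coordV N m v l) h
  rwa [coordV_mkV N f m l hl hf, coordV_mkV N g m l hl hg] at h2

theorem mkV_congr (N : ℕ) {f g : ℕ → ℕ} : ∀ (m : ℕ), (∀ l, l ≤ m → f l = g l) →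
    mkV N f m = mkV N g m
  | 0, h => by simp only [mkV, h 0 (le_refl _)]; rfl
  | m + 1, h => by
    simp only [mkV, h (m+1) (le_refl _)]
    exact congrArg _ (mkV_congr N m fun l hl => h l (by omega))

/-! ### Codes -/

/-- The weight of coordinate `j` in the code. -/
def dW (N : ℕ) : ℕ → ℕ
  | 0 => 1
  | j + 1 => tcell (N+2) j

theorem code_mkV_zero (N : ℕ) (f : ℕ → ℕ) : ∀ (m : ℕ), (∀ l, l ≤ m → f l = 0) →
    DCellCode (N+2) m (mkV N f m) = 0
  | 0, h => by simp [DCellCode, mkV, h 0 (le_refl _)]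
  | m + 1, h => by
    simp only [DCellCode, mkV, h (m+1) (le_refl _)]
    simp [code_mkV_zero N f m fun l hl => h l (by omega)]

theorem code_mkV_single (N : ℕ) (f : ℕ → ℕ) (j : ℕ) : ∀ (m : ℕ), j ≤ m → f j < dB N j →
    (∀ l, l ≤ m → l ≠ j → f l = 0) → DCellCode (N+2) m (mkV N f m) = f j * dW N j
  | 0, hj, hb, hz => by
    interval_cases j
    simp [DCellCode, mkV, dW, Nat.mod_eq_of_lt (show f 0 < N + 2 from hb)]
  | m + 1, hj, hb, hz => by
    rcases Nat.eq_or_lt_of_le hj with rfl | hj'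
    · simp only [DCellCode, mkV]
      rw [code_mkV_zero N f m fun l hl => hz l (by omega) (by omega)]
      rw [Nat.mod_eq_of_lt (show f (m+1) < tcell (N+2) m + 1 from hb)]
      simp [dW]
    · have hjm : j ≤ m := by omega
      simp only [DCellCode, mkV]
      rw [hz (m+1) (le_refl _) (by omega)]
      rw [code_mkV_single N f j m hjm hb fun l hl hne => hz l (by omega) hne]
      simp

theorem code_eq_zero (N : ℕ) : ∀ (m : ℕ) (x : DCellVertex (N+2) m),
    DCellCode (N+2) m x = 0 → x = mkV N (fun _ => 0) m
  | 0, x, h => by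
    apply Fin.ext
    simpa [DCellCode, mkV] using h
  | m + 1, x, h => by
    obtain ⟨x1, x2⟩ := x
    simp only [DCellCode] at h
    have ht : 0 < tcell (N+2) m := by have := two_le_tcell N m; omega
    have h1 : (x1 : ℕ) = 0 := by
      rcases Nat.eq_zero_of_add_eq_zero_left h with h'
      exact Nat.mul_eq_zero.1 h' |>.resolve_right (by omega)
    have h2 : DCellCode (N+2) m x2 = 0 := Nat.eq_zero_of_add_eq_zero_right h
    have hx2 := code_eq_zero N m x2 h2
    simp only [mkV]
    refine Prod.ext ?_ ?_
    · apply Fin.ext; simpa using h1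
    · exact hx2

/-! ### Adjacency lemmas -/

theorem adj_lift (n m : ℕ) (a : Fin (tcell n m + 1)) {x y : DCellVertex n m}
    (h : (DCell n m).Adj x y) : (DCell n (m+1)).Adj (a, x) (a, y) := by
  have hne : x ≠ y := h.ne
  show (SimpleGraph.fromRel _).Adj _ _
  refine (fromRel_adj ..).2 ?_
  exact ⟨fun hh => hne (congrArg Prod.snd hh), Or.inl (Or.inl ⟨rfl, h⟩)⟩

theorem adj_cross (n m : ℕ) (a b : Fin (tcell n m + 1)) (x y : DCellVertex n m)
    (h1 : (a : ℕ) < (b : ℕ)) (h2 : (a : ℕ) = DCellCode n m y)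
    (h3 : (b : ℕ) = DCellCode n m x + 1) : (DCell n (m+1)).Adj (a, x) (b, y) := by
  show (SimpleGraph.fromRel _).Adj _ _
  refine (fromRel_adj ..).2 ?_
  refine ⟨?_, Or.inl (Or.inr ⟨h1, h2, h3⟩)⟩
  intro hh
  have h' : a = b := congrArg Prod.fst hh
  have := congrArg Fin.val h'
  omega

theorem adj_mkV_high (N : ℕ) {f g : ℕ → ℕ} {l : ℕ} : ∀ (m : ℕ), l ≤ m →
    (∀ k, l < k → k ≤ m → f k = g k) →
    (DCell (N+2) l).Adj (mkV N f l) (mkV N g l) →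
    (DCell (N+2) m).Adj (mkV N f m) (mkV N g m)
  | 0, hl, _, h => by interval_cases l; exact h
  | m + 1, hl, heq, h => by
    rcases Nat.eq_or_lt_of_le hl with rfl | hl'
    · exact h
    · have hlm : l ≤ m := by omega
      have hadj := adj_mkV_high N m hlm (fun k h1 h2 => heq k h1 (by omega)) h
      have htop : f (m+1) = g (m+1) := heq (m+1) (by omega) (le_refl _)
      show (DCell (N+2) (m+1)).Adj
        (⟨f (m+1) % (tcell (N+2) m + 1), _⟩, mkV N f m)
        (⟨g (m+1) % (tcell (N+2) m + 1), _⟩, mkV N g m)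
      rw [show (⟨f (m+1) % (tcell (N+2) m + 1), Nat.mod_lt _ (by omega)⟩ : Fin (tcell (N+2) m + 1))
          = ⟨g (m+1) % (tcell (N+2) m + 1), Nat.mod_lt _ (by omega)⟩ from Fin.ext (by rw [htop])]
      exact adj_lift (N+2) m _ hadj

theorem adj_mkV_clique (N : ℕ) {f g : ℕ → ℕ} (m : ℕ)
    (heq : ∀ k, 1 ≤ k → k ≤ m → f k = g k)
    (hf : f 0 < N + 2) (hg : g 0 < N + 2) (hne : f 0 ≠ g 0) :
    (DCell (N+2) m).Adj (mkV N f m) (mkV N g m) := by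
  refine adj_mkV_high N m (Nat.zero_le _) (fun k h1 h2 => heq k h1 h2) ?_
  show (⊤ : SimpleGraph (Fin (N+2))).Adj ⟨f 0 % (N+2), _⟩ ⟨g 0 % (N+2), _⟩
  rw [top_adj]
  intro hh
  have := congrArg Fin.val hh
  simp only [Nat.mod_eq_of_lt hf, Nat.mod_eq_of_lt hg] at this
  exact hne this

theorem adj_mkV_cross (N : ℕ) {f g : ℕ → ℕ} {j m : ℕ} (hj1 : 1 ≤ j) (hjm : j ≤ m)
    (heq : ∀ k, j < k → k ≤ m → f k = g k)
    (hf : f j < tcell (N+2) (j-1) + 1) (hg : g j < tcell (N+2) (j-1) + 1)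
    (hlt : f j < g j)
    (h2 : f j = DCellCode (N+2) (j-1) (mkV N g (j-1)))
    (h3 : g j = DCellCode (N+2) (j-1) (mkV N f (j-1)) + 1) :
    (DCell (N+2) m).Adj (mkV N f m) (mkV N g m) := by
  obtain ⟨j', rfl⟩ : ∃ j', j = j' + 1 := ⟨j - 1, by omega⟩
  simp only [Nat.add_sub_cancel] at hf hg h2 h3
  refine adj_mkV_high N m hjm heq ?_
  show (DCell (N+2) (j'+1)).Adj
    (⟨f (j'+1) % (tcell (N+2) j' + 1), _⟩, mkV N f j')
    (⟨g (j'+1) % (tcell (N+2) j' + 1), _⟩, mkV N g j')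
  refine adj_cross (N+2) j' _ _ _ _ ?_ ?_ ?_ <;>
    simp only [Nat.mod_eq_of_lt hf, Nat.mod_eq_of_lt hg]
  · exact hlt
  · exact h2
  · exact h3

/-! ### The delta coordinate functions -/

/-- The coordinate function with value `a` at `j`, `b` at `i`, and `0` elsewhere. -/
def dlt2 (j a i b : ℕ) : ℕ → ℕ := fun l => if l = j then a else if l = i then b else 0

theorem mkV_pair (N m : ℕ) (f : ℕ → ℕ) :
    mkV N f (m+1) = (⟨f (m+1) % (tcell (N+2) m + 1), Nat.mod_lt _ (by omega)⟩, mkV N f m) := rfl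

/-! ### Neighbors of the zero vertex -/

theorem adj_zero (N : ℕ) : ∀ (m : ℕ) (w : DCellVertex (N+2) m),
    (DCell (N+2) m).Adj (mkV N (fun _ => 0) m) w →
    (∃ x, 1 ≤ x ∧ x ≤ N + 1 ∧ w = mkV N (dlt2 0 x 0 0) m) ∨
    (∃ j, 1 ≤ j ∧ j ≤ m ∧ w = mkV N (dlt2 j 1 0 0) m)
  | 0, w, h => by
    left
    have hne : mkV N (fun _ => 0) 0 ≠ w :=
      (top_adj (mkV N (fun _ => 0) 0) w).1 h
    have hw : (Fin.val (w : Fin (N+2))) ≠ 0 := by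
      intro h0
      apply hne
      apply Fin.ext
      simpa [mkV] using h0.symm
    have hlt := (w : Fin (N+2)).isLt
    refine ⟨Fin.val (w : Fin (N+2)), by omega, by omega, ?_⟩
    apply Fin.ext
    show Fin.val (w : Fin (N+2)) = _
    simp [mkV, dlt2, Nat.mod_eq_of_lt hlt]
  | m + 1, w, h => by
    obtain ⟨w1, w2⟩ := w
    have h' : (SimpleGraph.fromRel (fun u v : Fin (tcell (N+2) m + 1) × DCellVertex (N+2) m =>
        (u.1 = v.1 ∧ (DCell (N+2) m).Adj u.2 v.2) ∨
        ((u.1 : ℕ) < (v.1 : ℕ) ∧ (u.1 : ℕ) = DCellCode (N+2) m v.2 ∧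
          (v.1 : ℕ) = DCellCode (N+2) m u.2 + 1))).Adj (mkV N (fun _ => 0) (m+1)) (w1, w2) := h
    replace h' := (fromRel_adj ..).1 h'
    obtain ⟨hne, hr⟩ := h'
    have htc := two_le_tcell N m
    have hz1 : ((mkV N (fun _ => 0) (m+1)).1 : ℕ) = 0 := by simp [mkV]
    have hzcode : DCellCode (N+2) m (mkV N (fun _ => 0) m) = 0 :=
      code_mkV_zero N _ m (fun _ _ => rfl)
    -- the "same copy" case
    have hsame : (w1 : ℕ) = 0 → (DCell (N+2) m).Adj (mkV N (fun _ => 0) m) w2 →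
        (∃ x, 1 ≤ x ∧ x ≤ N + 1 ∧ (w1, w2) = mkV N (dlt2 0 x 0 0) (m+1)) ∨
        (∃ j, 1 ≤ j ∧ j ≤ m + 1 ∧ (w1, w2) = mkV N (dlt2 j 1 0 0) (m+1)) := by
      intro hw1 hadj
      rcases adj_zero N m w2 hadj with ⟨x, hx1, hx2, hxe⟩ | ⟨j, hj1, hj2, hje⟩
      · left
        refine ⟨x, hx1, hx2, ?_⟩
        rw [mkV_pair]
        refine Prod.ext (Fin.ext ?_) ?_
        · have hd : dlt2 0 x 0 0 (m+1) = 0 := by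
            simp only [dlt2]; rw [if_neg (by omega), if_neg (by omega)]
          simp [hd, hw1]
        · exact hxe
      · right
        refine ⟨j, hj1, by omega, ?_⟩
        rw [mkV_pair]
        refine Prod.ext (Fin.ext ?_) ?_
        · have hd : dlt2 j 1 0 0 (m+1) = 0 := by
            simp only [dlt2]; rw [if_neg (by omega), if_neg (by omega)]
          simp [hd, hw1]
        · exact hje
    -- the "cross edge" case
    have hcross : DCellCode (N+2) m w2 = 0 → (w1 : ℕ) = DCellCode (N+2) m (mkV N (fun _ => 0) m) + 1 →
        (∃ x, 1 ≤ x ∧ x ≤ N + 1 ∧ (w1, w2) = mkV N (dlt2 0 x 0 0) (m+1)) ∨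
        (∃ j, 1 ≤ j ∧ j ≤ m + 1 ∧ (w1, w2) = mkV N (dlt2 j 1 0 0) (m+1)) := by
      intro hc1 hc2
      right
      refine ⟨m+1, by omega, le_refl _, ?_⟩
      rw [mkV_pair]
      refine Prod.ext (Fin.ext ?_) ?_
      · have hd : dlt2 (m+1) 1 0 0 (m+1) = 1 := by simp [dlt2]
        rw [hd]
        rw [hzcode] at hc2
        simp [hc2, Nat.mod_eq_of_lt (show 1 < tcell (N+2) m + 1 by omega)]
      · rw [code_eq_zero N m w2 hc1]
        exact mkV_congr N m (fun l hl => by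
          simp only [dlt2]; rw [if_neg (by omega)]; simp)
    rcases hr with (⟨he, hadj⟩ | ⟨hlt, hc1, hc2⟩) | (⟨he, hadj⟩ | ⟨hlt, hc1, hc2⟩)
    · exact hsame (by simpa using (congrArg Fin.val he).symm.trans hz1) hadj
    · exact hcross (by simpa using hc1.symm.trans hz1) (by exact hc2)
    · exact hsame (by simpa using (congrArg Fin.val he).trans hz1) hadj.symm
    · rw [hz1] at hlt
      exact absurd hlt (Nat.not_lt_zero _)

/-! ### Leaves of the stars -/

theorem dB_ge (N : ℕ) : ∀ l, N + 2 ≤ dB N l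
  | 0 => le_refl _
  | l + 1 => by have := two_le_tcell N l; show N + 2 ≤ tcell (N+2) l + 1; omega

theorem dB_succ (N l : ℕ) : dB N (l + 1) = tcell (N+2) l + 1 := rfl

theorem dW_succ (N l : ℕ) : dW N (l + 1) = tcell (N+2) l := rfl

/-- Leaves of the star centered at the clique neighbor `x·e₀` of the zero vertex. -/
def leafC (N t x : ℕ) (i : Fin t) : ℕ → ℕ :=
  if (i : ℕ) < N + 1 - x then dlt2 0 (x + 1 + (i : ℕ)) 0 0
  else if (i : ℕ) < N then dlt2 0 ((i : ℕ) - (N + 1 - x) + 1) 0 0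
  else dlt2 ((i : ℕ) - N + 1) (x + 1) 0 0

/-- Leaves of the star centered at the level-`j` neighbor `e_j` of the zero vertex. -/
def leafE (N m j : ℕ) {t : ℕ} (i : Fin t) : ℕ → ℕ :=
  if (i : ℕ) < N + 1 then dlt2 j 1 0 ((i : ℕ) + 1)
  else if (i : ℕ) < N + j then dlt2 j 1 ((i : ℕ) - (N + 1) + 1) 1
  else dlt2 ((i : ℕ) - N + 1) (tcell (N+2) (j-1) + 1) 0 0

section LeafC

variable {N m t x : ℕ}

theorem leafC_adj (hx1 : 1 ≤ x) (hx2 : x ≤ N + 1) (htt : t ≤ N + m) (i : Fin t) :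
    (DCell (N+2) m).Adj (mkV N (dlt2 0 x 0 0) m) (mkV N (leafC N t x i) m) := by
  have hi := i.isLt
  unfold leafC
  split_ifs with h1 h2
  · refine adj_mkV_clique N m (fun k hk1 hk2 => ?_) ?_ ?_ ?_ <;>
      simp only [dlt2] <;> split_ifs <;> first | omega | exact ‹False›.elim
  · refine adj_mkV_clique N m (fun k hk1 hk2 => ?_) ?_ ?_ ?_ <;>
      simp only [dlt2] <;> split_ifs <;> first | omega | exact ‹False›.elim
  · -- cross edge at level `(i:ℕ) - N + 1`
    have htc := two_le_tcell N ((i : ℕ) - N + 1 - 1)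
    refine adj_mkV_cross N (j := (i : ℕ) - N + 1) (by omega) (by omega)
      (fun k hk1 hk2 => ?_) ?_ ?_ ?_ ?_ ?_
    · simp only [dlt2]; split_ifs <;> first | omega | exact ‹False›.elim
    · simp only [dlt2]; split_ifs <;> first | omega | exact ‹False›.elim
    · simp only [dlt2]; split_ifs <;> first | omega | exact ‹False›.elim
    · simp only [dlt2]; split_ifs <;> first | omega | exact ‹False›.elim
    · rw [code_mkV_zero N _ _ (fun l hl => by simp only [dlt2]; split_ifs <;> first | omega | exact ‹False›.elim)]
      simp only [dlt2]; split_ifs <;> first | omega | exact ‹False›.elim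
    · rw [code_mkV_single N _ 0 _ (by omega)
        (by simp only [dlt2, dB]; split_ifs <;> first | omega | exact ‹False›.elim)
        (fun l hl hlne => by simp only [dlt2]; split_ifs <;> first | omega | exact ‹False›.elim)]
      simp only [dlt2, dW]
      split_ifs <;> first | omega | exact ‹False›.elim

theorem leafC_inj (hx1 : 1 ≤ x) (hx2 : x ≤ N + 1) (htt : t ≤ N + m) : Function.Injective (fun i : Fin t => mkV N (leafC N t x i) m) := by
  intro i i' hii
  by_contra hne'
  have hne : (i : ℕ) ≠ (i' : ℕ) := fun hh => hne' (Fin.ext hh)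
  have hi := i.isLt
  have hi' := i'.isLt
  revert hii
  simp only [leafC]
  have hdb0 : dB N 0 = N + 2 := rfl
  split_ifs with h1 h2 h3 h4 h5 h6 h7 h8 <;> intro hii <;> apply absurd hii
  -- (1,1)
  · exact mkV_ne N (l := 0) (by omega) (by simp only [dlt2]; split_ifs <;> first | omega | exact ‹False›.elim)
      (by simp only [dlt2]; split_ifs <;> first | omega | exact ‹False›.elim) (by simp only [dlt2]; split_ifs <;> first | omega | exact ‹False›.elim)
  -- (1,2)
  · exact mkV_ne N (l := 0) (by omega) (by simp only [dlt2]; split_ifs <;> first | omega | exact ‹False›.elim)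
      (by simp only [dlt2]; split_ifs <;> first | omega | exact ‹False›.elim) (by simp only [dlt2]; split_ifs <;> first | omega | exact ‹False›.elim)
  -- (1,3)
  · have hdbL : dB N ((i' : ℕ) - N + 1) = tcell (N+2) ((i' : ℕ) - N) + 1 := rfl
    have htc := two_le_tcell N ((i' : ℕ) - N)
    exact mkV_ne N (l := (i' : ℕ) - N + 1) (by omega)
      (by simp only [dlt2]; split_ifs <;> first | omega | exact ‹False›.elim)
      (by simp only [dlt2]; split_ifs <;> first | omega | exact ‹False›.elim)
      (by simp only [dlt2]; split_ifs <;> first | omega | exact ‹False›.elim)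
  -- (2,1)
  · exact mkV_ne N (l := 0) (by omega) (by simp only [dlt2]; split_ifs <;> first | omega | exact ‹False›.elim)
      (by simp only [dlt2]; split_ifs <;> first | omega | exact ‹False›.elim) (by simp only [dlt2]; split_ifs <;> first | omega | exact ‹False›.elim)
  -- (2,2)
  · exact mkV_ne N (l := 0) (by omega) (by simp only [dlt2]; split_ifs <;> first | omega | exact ‹False›.elim)
      (by simp only [dlt2]; split_ifs <;> first | omega | exact ‹False›.elim) (by simp only [dlt2]; split_ifs <;> first | omega | exact ‹False›.elim)
  -- (2,3)
  · have hdbL : dB N ((i' : ℕ) - N + 1) = tcell (N+2) ((i' : ℕ) - N) + 1 := rfl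
    have htc := two_le_tcell N ((i' : ℕ) - N)
    exact mkV_ne N (l := (i' : ℕ) - N + 1) (by omega)
      (by simp only [dlt2]; split_ifs <;> first | omega | exact ‹False›.elim)
      (by simp only [dlt2]; split_ifs <;> first | omega | exact ‹False›.elim)
      (by simp only [dlt2]; split_ifs <;> first | omega | exact ‹False›.elim)
  -- (3,1)
  · have hdbL : dB N ((i : ℕ) - N + 1) = tcell (N+2) ((i : ℕ) - N) + 1 := rfl
    have htc := two_le_tcell N ((i : ℕ) - N)
    exact mkV_ne N (l := (i : ℕ) - N + 1) (by omega)
      (by simp only [dlt2]; split_ifs <;> first | omega | exact ‹False›.elim)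
      (by simp only [dlt2]; split_ifs <;> first | omega | exact ‹False›.elim)
      (by simp only [dlt2]; split_ifs <;> first | omega | exact ‹False›.elim)
  -- (3,2)
  · have hdbL : dB N ((i : ℕ) - N + 1) = tcell (N+2) ((i : ℕ) - N) + 1 := rfl
    have htc := two_le_tcell N ((i : ℕ) - N)
    exact mkV_ne N (l := (i : ℕ) - N + 1) (by omega)
      (by simp only [dlt2]; split_ifs <;> first | omega | exact ‹False›.elim)
      (by simp only [dlt2]; split_ifs <;> first | omega | exact ‹False›.elim)
      (by simp only [dlt2]; split_ifs <;> first | omega | exact ‹False›.elim)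
  -- (3,3)
  · have hdbL : dB N ((i : ℕ) - N + 1) = tcell (N+2) ((i : ℕ) - N) + 1 := rfl
    have htc := two_le_tcell N ((i : ℕ) - N)
    exact mkV_ne N (l := (i : ℕ) - N + 1) (by omega)
      (by simp only [dlt2]; split_ifs <;> first | omega | exact ‹False›.elim)
      (by simp only [dlt2]; split_ifs <;> first | omega | exact ‹False›.elim)
      (by simp only [dlt2]; split_ifs <;> first | omega | exact ‹False›.elim)

theorem leafC_ne_center (hx1 : 1 ≤ x) (hx2 : x ≤ N + 1) (htt : t ≤ N + m) (i : Fin t) :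
    mkV N (leafC N t x i) m ≠ mkV N (dlt2 0 x 0 0) m := by
  have hi := i.isLt
  have hdb0 : dB N 0 = N + 2 := rfl
  unfold leafC
  split_ifs with h1 h2
  · exact mkV_ne N (l := 0) (by omega) (by simp only [dlt2]; split_ifs <;> first | omega | exact ‹False›.elim)
      (by simp only [dlt2]; split_ifs <;> first | omega | exact ‹False›.elim) (by simp only [dlt2]; split_ifs <;> first | omega | exact ‹False›.elim)
  · exact mkV_ne N (l := 0) (by omega) (by simp only [dlt2]; split_ifs <;> first | omega | exact ‹False›.elim)
      (by simp only [dlt2]; split_ifs <;> first | omega | exact ‹False›.elim) (by simp only [dlt2]; split_ifs <;> first | omega | exact ‹False›.elim)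
  · exact mkV_ne N (l := 0) (by omega) (by simp only [dlt2]; split_ifs <;> first | omega | exact ‹False›.elim)
      (by simp only [dlt2]; split_ifs <;> first | omega | exact ‹False›.elim) (by simp only [dlt2]; split_ifs <;> first | omega | exact ‹False›.elim)

theorem leafC_ne_zero (hx1 : 1 ≤ x) (hx2 : x ≤ N + 1) (htt : t ≤ N + m) (i : Fin t) :
    mkV N (leafC N t x i) m ≠ mkV N (fun _ => 0) m := by
  have hi := i.isLt
  have hdb0 : dB N 0 = N + 2 := rfl
  unfold leafC
  split_ifs with h1 h2
  · exact mkV_ne N (l := 0) (by omega) (by simp only [dlt2]; split_ifs <;> first | omega | exact ‹False›.elim)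
      (by omega) (by simp only [dlt2]; split_ifs <;> first | omega | exact ‹False›.elim)
  · exact mkV_ne N (l := 0) (by omega) (by simp only [dlt2]; split_ifs <;> first | omega | exact ‹False›.elim)
      (by omega) (by simp only [dlt2]; split_ifs <;> first | omega | exact ‹False›.elim)
  · have hdbL : dB N ((i : ℕ) - N + 1) = tcell (N+2) ((i : ℕ) - N) + 1 := rfl
    have htc := two_le_tcell N ((i : ℕ) - N)
    exact mkV_ne N (l := (i : ℕ) - N + 1) (by omega)
      (by simp only [dlt2]; split_ifs <;> first | omega | exact ‹False›.elim)
      (by omega)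
      (by simp only [dlt2]; split_ifs <;> first | omega | exact ‹False›.elim)

end LeafC

section LeafE

variable {N m t j : ℕ}

theorem dW_eq (N : ℕ) {j : ℕ} (hj : 1 ≤ j) : dW N j = tcell (N+2) (j - 1) := by
  match j, hj with
  | j + 1, _ => rfl

theorem leafE_adj (hj1 : 1 ≤ j) (hjm : j ≤ m) (htt : t ≤ N + m) (i : Fin t) :
    (DCell (N+2) m).Adj (mkV N (dlt2 j 1 0 0) m) (mkV N (leafE N m j i) m) := by
  have hi := i.isLt
  unfold leafE
  split_ifs with h1 h2
  · refine adj_mkV_clique N m (fun k hk1 hk2 => ?_) ?_ ?_ ?_ <;>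
      simp only [dlt2] <;> split_ifs <;> first | omega | exact ‹False›.elim
  · -- cross edge at level `(i:ℕ) - (N+1) + 1 ≤ j - 1`
    have htc := two_le_tcell N ((i : ℕ) - (N + 1) + 1 - 1)
    refine adj_mkV_cross N (j := (i : ℕ) - (N + 1) + 1) (by omega) (by omega)
      (fun k hk1 hk2 => ?_) ?_ ?_ ?_ ?_ ?_
    · simp only [dlt2]; split_ifs <;> first | omega | exact ‹False›.elim
    · simp only [dlt2]; split_ifs <;> first | omega | exact ‹False›.elim
    · simp only [dlt2]; split_ifs <;> first | omega | exact ‹False›.elim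
    · simp only [dlt2]; split_ifs <;> first | omega | exact ‹False›.elim
    · rw [code_mkV_zero N _ _ (fun l hl => by
        simp only [dlt2]; split_ifs <;> first | omega | exact ‹False›.elim)]
      simp only [dlt2]; split_ifs <;> first | omega | exact ‹False›.elim
    · rw [code_mkV_zero N _ _ (fun l hl => by
        simp only [dlt2]; split_ifs <;> first | omega | exact ‹False›.elim)]
      simp only [dlt2]; split_ifs <;> first | omega | exact ‹False›.elim
  · -- cross edge at level `(i:ℕ) - N + 1 ≥ j + 1`
    have htc := two_le_tcell N ((i : ℕ) - N + 1 - 1)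
    have htc2 := two_le_tcell N (j - 1)
    have hts : tcell (N+2) (j-1) < tcell (N+2) ((i : ℕ) - N + 1 - 1) :=
      tcell_strict N (by omega)
    refine adj_mkV_cross N (j := (i : ℕ) - N + 1) (by omega) (by omega)
      (fun k hk1 hk2 => ?_) ?_ ?_ ?_ ?_ ?_
    · simp only [dlt2]; split_ifs <;> first | omega | exact ‹False›.elim
    · simp only [dlt2]; split_ifs <;> first | omega | exact ‹False›.elim
    · simp only [dlt2]; split_ifs <;> first | omega | exact ‹False›.elim
    · simp only [dlt2]; split_ifs <;> first | omega | exact ‹False›.elim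
    · rw [code_mkV_zero N _ _ (fun l hl => by
        simp only [dlt2]; split_ifs <;> first | omega | exact ‹False›.elim)]
      simp only [dlt2]; split_ifs <;> first | omega | exact ‹False›.elim
    · rw [code_mkV_single N _ j _ (by omega)
        (by have := dB_ge N j; simp only [dlt2]; split_ifs <;> first | omega | exact ‹False›.elim)
        (fun l hl hlne => by simp only [dlt2]; split_ifs <;> first | omega | exact ‹False›.elim)]
      rw [dW_eq N hj1]
      simp only [dlt2]; split_ifs <;> first | omega | exact ‹False›.elim

theorem leafE_inj (hj1 : 1 ≤ j) (hjm : j ≤ m) (htt : t ≤ N + m) :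
    Function.Injective (fun i : Fin t => mkV N (leafE N m j i) m) := by
  intro i i' hii
  by_contra hne'
  have hne : (i : ℕ) ≠ (i' : ℕ) := fun hh => hne' (Fin.ext hh)
  have hi := i.isLt
  have hi' := i'.isLt
  have hdb0 : dB N 0 = N + 2 := rfl
  revert hii
  simp only [leafE]
  split_ifs with h1 h2 h3 h4 h5 h6 h7 h8 <;> intro hii <;> apply absurd hii
  -- (1,1)
  · exact mkV_ne N (l := 0) (by omega)
      (by simp only [dlt2]; split_ifs <;> first | omega | exact ‹False›.elim)
      (by simp only [dlt2]; split_ifs <;> first | omega | exact ‹False›.elim)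
      (by simp only [dlt2]; split_ifs <;> first | omega | exact ‹False›.elim)
  -- (1,2)
  · exact mkV_ne N (l := 0) (by omega)
      (by simp only [dlt2]; split_ifs <;> first | omega | exact ‹False›.elim)
      (by simp only [dlt2]; split_ifs <;> first | omega | exact ‹False›.elim)
      (by simp only [dlt2]; split_ifs <;> first | omega | exact ‹False›.elim)
  -- (1,3)
  · exact mkV_ne N (l := 0) (by omega)
      (by simp only [dlt2]; split_ifs <;> first | omega | exact ‹False›.elim)
      (by simp only [dlt2]; split_ifs <;> first | omega | exact ‹False›.elim)
      (by simp only [dlt2]; split_ifs <;> first | omega | exact ‹False›.elim)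
  -- (2,1)
  · have hdbL : dB N ((i : ℕ) - (N+1) + 1) = tcell (N+2) ((i : ℕ) - (N+1)) + 1 := rfl
    have htc := two_le_tcell N ((i : ℕ) - (N+1))
    exact mkV_ne N (l := (i : ℕ) - (N+1) + 1) (by omega)
      (by simp only [dlt2]; split_ifs <;> first | omega | exact ‹False›.elim)
      (by simp only [dlt2]; split_ifs <;> first | omega | exact ‹False›.elim)
      (by simp only [dlt2]; split_ifs <;> first | omega | exact ‹False›.elim)
  -- (2,2)
  · have hdbL : dB N ((i : ℕ) - (N+1) + 1) = tcell (N+2) ((i : ℕ) - (N+1)) + 1 := rfl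
    have htc := two_le_tcell N ((i : ℕ) - (N+1))
    exact mkV_ne N (l := (i : ℕ) - (N+1) + 1) (by omega)
      (by simp only [dlt2]; split_ifs <;> first | omega | exact ‹False›.elim)
      (by simp only [dlt2]; split_ifs <;> first | omega | exact ‹False›.elim)
      (by simp only [dlt2]; split_ifs <;> first | omega | exact ‹False›.elim)
  -- (2,3)
  · have hdbL : dB N ((i : ℕ) - (N+1) + 1) = tcell (N+2) ((i : ℕ) - (N+1)) + 1 := rfl
    have htc := two_le_tcell N ((i : ℕ) - (N+1))
    exact mkV_ne N (l := (i : ℕ) - (N+1) + 1) (by omega)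
      (by simp only [dlt2]; split_ifs <;> first | omega | exact ‹False›.elim)
      (by simp only [dlt2]; split_ifs <;> first | omega | exact ‹False›.elim)
      (by simp only [dlt2]; split_ifs <;> first | omega | exact ‹False›.elim)
  -- (3,1)
  · have hdbL : dB N ((i : ℕ) - N + 1) = tcell (N+2) ((i : ℕ) - N) + 1 := rfl
    have htc := two_le_tcell N ((i : ℕ) - N)
    have htc2 := two_le_tcell N (j - 1)
    have hts : tcell (N+2) (j-1) < tcell (N+2) ((i : ℕ) - N) := tcell_strict N (by omega)
    exact mkV_ne N (l := (i : ℕ) - N + 1) (by omega)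
      (by simp only [dlt2]; split_ifs <;> first | omega | exact ‹False›.elim)
      (by simp only [dlt2]; split_ifs <;> first | omega | exact ‹False›.elim)
      (by simp only [dlt2]; split_ifs <;> first | omega | exact ‹False›.elim)
  -- (3,2)
  · have hdbL : dB N ((i : ℕ) - N + 1) = tcell (N+2) ((i : ℕ) - N) + 1 := rfl
    have htc := two_le_tcell N ((i : ℕ) - N)
    have htc2 := two_le_tcell N (j - 1)
    have hts : tcell (N+2) (j-1) < tcell (N+2) ((i : ℕ) - N) := tcell_strict N (by omega)
    exact mkV_ne N (l := (i : ℕ) - N + 1) (by omega)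
      (by simp only [dlt2]; split_ifs <;> first | omega | exact ‹False›.elim)
      (by simp only [dlt2]; split_ifs <;> first | omega | exact ‹False›.elim)
      (by simp only [dlt2]; split_ifs <;> first | omega | exact ‹False›.elim)
  -- (3,3)
  · have hdbL : dB N ((i : ℕ) - N + 1) = tcell (N+2) ((i : ℕ) - N) + 1 := rfl
    have htc := two_le_tcell N ((i : ℕ) - N)
    have htc2 := two_le_tcell N (j - 1)
    have hts : tcell (N+2) (j-1) < tcell (N+2) ((i : ℕ) - N) := tcell_strict N (by omega)
    exact mkV_ne N (l := (i : ℕ) - N + 1) (by omega)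
      (by simp only [dlt2]; split_ifs <;> first | omega | exact ‹False›.elim)
      (by simp only [dlt2]; split_ifs <;> first | omega | exact ‹False›.elim)
      (by simp only [dlt2]; split_ifs <;> first | omega | exact ‹False›.elim)

theorem leafE_ne_center (hj1 : 1 ≤ j) (hjm : j ≤ m) (htt : t ≤ N + m) (i : Fin t) :
    mkV N (leafE N m j i) m ≠ mkV N (dlt2 j 1 0 0) m := by
  have hi := i.isLt
  have hdb0 : dB N 0 = N + 2 := rfl
  unfold leafE
  split_ifs with h1 h2
  · exact mkV_ne N (l := 0) (by omega)
      (by simp only [dlt2]; split_ifs <;> first | omega | exact ‹False›.elim)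
      (by simp only [dlt2]; split_ifs <;> first | omega | exact ‹False›.elim)
      (by simp only [dlt2]; split_ifs <;> first | omega | exact ‹False›.elim)
  · have hdbL : dB N ((i : ℕ) - (N+1) + 1) = tcell (N+2) ((i : ℕ) - (N+1)) + 1 := rfl
    have htc := two_le_tcell N ((i : ℕ) - (N+1))
    exact mkV_ne N (l := (i : ℕ) - (N+1) + 1) (by omega)
      (by simp only [dlt2]; split_ifs <;> first | omega | exact ‹False›.elim)
      (by simp only [dlt2]; split_ifs <;> first | omega | exact ‹False›.elim)
      (by simp only [dlt2]; split_ifs <;> first | omega | exact ‹False›.elim)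
  · have hdbL : dB N ((i : ℕ) - N + 1) = tcell (N+2) ((i : ℕ) - N) + 1 := rfl
    have htc := two_le_tcell N ((i : ℕ) - N)
    have htc2 := two_le_tcell N (j - 1)
    have hts : tcell (N+2) (j-1) < tcell (N+2) ((i : ℕ) - N) := tcell_strict N (by omega)
    exact mkV_ne N (l := (i : ℕ) - N + 1) (by omega)
      (by simp only [dlt2]; split_ifs <;> first | omega | exact ‹False›.elim)
      (by simp only [dlt2]; split_ifs <;> first | omega | exact ‹False›.elim)
      (by simp only [dlt2]; split_ifs <;> first | omega | exact ‹False›.elim)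

theorem leafE_ne_zero (hj1 : 1 ≤ j) (hjm : j ≤ m) (htt : t ≤ N + m) (i : Fin t) :
    mkV N (leafE N m j i) m ≠ mkV N (fun _ => 0) m := by
  have hi := i.isLt
  have hdb0 : dB N 0 = N + 2 := rfl
  have hdbj := dB_ge N j
  unfold leafE
  split_ifs with h1 h2
  · exact mkV_ne N (l := j) (by omega)
      (by simp only [dlt2]; split_ifs <;> first | omega | exact ‹False›.elim)
      (by omega)
      (by simp only [dlt2]; split_ifs <;> first | omega | exact ‹False›.elim)
  · exact mkV_ne N (l := j) (by omega)
      (by simp only [dlt2]; split_ifs <;> first | omega | exact ‹False›.elim)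
      (by omega)
      (by simp only [dlt2]; split_ifs <;> first | omega | exact ‹False›.elim)
  · have hdbL : dB N ((i : ℕ) - N + 1) = tcell (N+2) ((i : ℕ) - N) + 1 := rfl
    have htc := two_le_tcell N ((i : ℕ) - N)
    have htc2 := two_le_tcell N (j - 1)
    have hts : tcell (N+2) (j-1) < tcell (N+2) ((i : ℕ) - N) := tcell_strict N (by omega)
    exact mkV_ne N (l := (i : ℕ) - N + 1) (by omega)
      (by simp only [dlt2]; split_ifs <;> first | omega | exact ‹False›.elim)
      (by omega)
      (by simp only [dlt2]; split_ifs <;> first | omega | exact ‹False›.elim)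

end LeafE

theorem center_c_ne_zero (N : ℕ) {m x : ℕ} (hx1 : 1 ≤ x) (hx2 : x ≤ N + 1) :
    mkV N (dlt2 0 x 0 0) m ≠ mkV N (fun _ => 0) m := by
  have hdb0 : dB N 0 = N + 2 := rfl
  exact mkV_ne N (l := 0) (by omega)
    (by simp only [dlt2]; split_ifs <;> first | omega | exact ‹False›.elim)
    (by omega)
    (by simp only [dlt2]; split_ifs <;> first | omega | exact ‹False›.elim)

theorem center_e_ne_zero (N : ℕ) {m j : ℕ} (hj1 : 1 ≤ j) (hjm : j ≤ m) :
    mkV N (dlt2 j 1 0 0) m ≠ mkV N (fun _ => 0) m := by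
  have hdbj := dB_ge N j
  exact mkV_ne N (l := j) (by omega)
    (by simp only [dlt2]; split_ifs <;> first | omega | exact ‹False›.elim)
    (by omega)
    (by simp only [dlt2]; split_ifs <;> first | omega | exact ‹False›.elim)

/-- For all integers `m ≥ 0`, `n ≥ 2` and `1 ≤ t ≤ m + n - 2`,
`κ(D_{m,n}; K_{1,t}) ≤ ⌈(n-1)/(1+t)⌉ + m`. -/
theorem dcell_star_structConn_upper (m n t : ℕ) (hn : 2 ≤ n) (ht1 : 1 ≤ t)
    (ht2 : t ≤ m + n - 2) :
    (DCell n m).structConn (_root_.starGraph t) ≤ (n - 1 + t) / (1 + t) + m := by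
  classical
  obtain ⟨N, rfl⟩ : ∃ N, n = N + 2 := ⟨n - 2, by omega⟩
  have htt : t ≤ N + m := by omega
  set s := (N + 1 + t) / (1 + t) with hs
  have hxk : ∀ k : ℕ, k < s → 1 + k * (1 + t) ≤ N + 1 := by
    intro k hk
    have h1 : k + 1 ≤ s := hk
    have h2 := (Nat.le_div_iff_mul_le (by omega : 0 < 1 + t)).1 (hs ▸ h1)
    have h3 : (k + 1) * (1 + t) = k * (1 + t) + (1 + t) := by ring
    omega
  -- the two families of stars
  let SC : {k // k ∈ Finset.range s} → (DCell (N+2) m).Subgraph := fun k =>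
    starSub (DCell (N+2) m) (mkV N (dlt2 0 (1 + k.1 * (1 + t)) 0 0) m)
      (fun i : Fin t => mkV N (leafC N t (1 + k.1 * (1 + t)) i) m)
      (fun i => leafC_adj (by omega) (hxk k.1 (Finset.mem_range.1 k.2)) htt i)
  let SE : {j // j ∈ Finset.Icc 1 m} → (DCell (N+2) m).Subgraph := fun j =>
    starSub (DCell (N+2) m) (mkV N (dlt2 j.1 1 0 0) m)
      (fun i : Fin t => mkV N (leafE N m j.1 i) m)
      (fun i => leafE_adj (Finset.mem_Icc.1 j.2).1 (Finset.mem_Icc.1 j.2).2 htt i)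
  let F : Finset ((DCell (N+2) m).Subgraph) :=
    (Finset.range s).attach.image SC ∪ (Finset.Icc 1 m).attach.image SE
  -- every member of F is a star
  have hiso : ∀ A ∈ F, Nonempty (A.coe ≃g _root_.starGraph t) := by
    intro A hA
    rcases Finset.mem_union.1 hA with hA | hA
    · obtain ⟨k, -, rfl⟩ := Finset.mem_image.1 hA
      exact starSub_iso _ _ _ _
        (leafC_inj (by omega) (hxk k.1 (Finset.mem_range.1 k.2)) htt)
        (fun i => leafC_ne_center (by omega) (hxk k.1 (Finset.mem_range.1 k.2)) htt i)
    · obtain ⟨j, -, rfl⟩ := Finset.mem_image.1 hA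
      exact starSub_iso _ _ _ _
        (leafE_inj (Finset.mem_Icc.1 j.2).1 (Finset.mem_Icc.1 j.2).2 htt)
        (fun i => leafE_ne_center (Finset.mem_Icc.1 j.2).1 (Finset.mem_Icc.1 j.2).2 htt i)
  -- the zero vertex avoids all stars
  have hz_not : mkV N (fun _ => 0) m ∉ SimpleGraph.cutVerts F := by
    intro hzc'
    simp only [SimpleGraph.cutVerts, Set.mem_iUnion] at hzc'
    obtain ⟨A, hA, hzA⟩ := hzc'
    rcases Finset.mem_union.1 hA with hA' | hA'
    · obtain ⟨k, -, rfl⟩ := Finset.mem_image.1 hA'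
      rcases Set.mem_insert_iff.1 hzA with hz1 | ⟨i, hi⟩
      · exact center_c_ne_zero N (by omega) (hxk k.1 (Finset.mem_range.1 k.2)) hz1.symm
      · exact leafC_ne_zero (by omega) (hxk k.1 (Finset.mem_range.1 k.2)) htt i hi
    · obtain ⟨j, -, rfl⟩ := Finset.mem_image.1 hA'
      rcases Set.mem_insert_iff.1 hzA with hz1 | ⟨i, hi⟩
      · exact center_e_ne_zero N (Finset.mem_Icc.1 j.2).1 (Finset.mem_Icc.1 j.2).2 hz1.symm
      · exact leafE_ne_zero (Finset.mem_Icc.1 j.2).1 (Finset.mem_Icc.1 j.2).2 htt i hi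
  -- all neighbors of the zero vertex are covered
  have hcov : ∀ w, (DCell (N+2) m).Adj (mkV N (fun _ => 0) m) w →
      w ∈ SimpleGraph.cutVerts F := by
    intro w hw
    rcases adj_zero N m w hw with ⟨x, hx1, hx2, rfl⟩ | ⟨j, hj1, hj2, rfl⟩
    · -- clique neighbor, covered by star `(x-1)/(1+t)`
      set k := (x - 1) / (1 + t) with hk
      have hks : k < s := by
        have h1 : x - 1 ≤ N := by omega
        have h2 : (x - 1) / (1 + t) ≤ N / (1 + t) := Nat.div_le_div_right h1
        have h3 : s = N / (1 + t) + 1 := by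
          rw [hs, show N + 1 + t = N + (1 + t) by omega, Nat.add_div_right _ (by omega)]
        omega
      have hkmem : k ∈ Finset.range s := Finset.mem_range.2 hks
      have hAF : SC ⟨k, hkmem⟩ ∈ F :=
        Finset.mem_union_left _ (Finset.mem_image_of_mem _ (Finset.mem_attach _ _))
      have hdm := Nat.div_add_mod (x - 1) (1 + t)
      rw [← hk] at hdm
      have hcomm : (1 + t) * k = k * (1 + t) := by ring
      have hmod : (x - 1) % (1 + t) < 1 + t := Nat.mod_lt _ (by omega)
      refine Set.mem_biUnion hAF ?_
      by_cases hxc : x = 1 + k * (1 + t)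
      · rw [hxc]
        exact Set.mem_insert _ _
      · have hxgt : 1 + k * (1 + t) < x := by omega
        have hit : x - (1 + k * (1 + t)) - 1 < t := by omega
        refine Set.mem_insert_iff.2 (Or.inr ⟨⟨x - (1 + k * (1 + t)) - 1, hit⟩, ?_⟩)
        have hcond : ((⟨x - (1 + k * (1 + t)) - 1, hit⟩ : Fin t) : ℕ) < N + 1 - (1 + k * (1 + t)) := by
          show x - (1 + k * (1 + t)) - 1 < N + 1 - (1 + k * (1 + t))
          omega
        show mkV N (leafC N t (1 + k * (1 + t)) _) m = _
        unfold leafC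
        rw [if_pos hcond]
        have harg : 1 + k * (1 + t) + 1 + ((⟨x - (1 + k * (1 + t)) - 1, hit⟩ : Fin t) : ℕ) = x := by
          show 1 + k * (1 + t) + 1 + (x - (1 + k * (1 + t)) - 1) = x
          omega
        rw [harg]
    · -- level neighbor, center of the level-j star
      have hjmem : j ∈ Finset.Icc 1 m := Finset.mem_Icc.2 ⟨hj1, hj2⟩
      have hAF : SE ⟨j, hjmem⟩ ∈ F :=
        Finset.mem_union_right _ (Finset.mem_image_of_mem _ (Finset.mem_attach _ _))
      exact Set.mem_biUnion hAF (Set.mem_insert _ _)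
  -- F is a subgraph cut
  have hcut : (DCell (N+2) m).IsSubgraphCut F := by
    by_cases hss : ((SimpleGraph.cutVerts F)ᶜ : Set (DCellVertex (N+2) m)).Subsingleton
    · exact Or.inr hss
    · refine Or.inl ?_
      intro hconn
      obtain ⟨a, ha, b, hb, hab⟩ := Set.not_subsingleton_iff.1 hss
      obtain ⟨w, hw, hwz⟩ : ∃ w, w ∈ (SimpleGraph.cutVerts F)ᶜ ∧ w ≠ mkV N (fun _ => 0) m := by
        by_cases haz : a = mkV N (fun _ => 0) m
        · exact ⟨b, hb, fun hh => hab (haz.trans hh.symm)⟩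
        · exact ⟨a, ha, haz⟩
      have hreach := hconn.preconnected ⟨mkV N (fun _ => 0) m, hz_not⟩ ⟨w, hw⟩
      obtain ⟨p⟩ := hreach
      cases p with
      | nil => exact hwz rfl
      | cons h' p' =>
        rename_i v
        have hadj : (DCell (N+2) m).Adj (mkV N (fun _ => 0) m) (v : DCellVertex (N+2) m) := h'
        exact v.2 (hcov _ hadj)
  -- conclusion
  have hFmem : F.card ∈ {k | ∃ F' : Finset ((DCell (N+2) m).Subgraph),
      (DCell (N+2) m).IsStructureCut (_root_.starGraph t) F' ∧ F'.card = k} :=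
    ⟨F, ⟨hcut, hiso⟩, rfl⟩
  have hcard : F.card ≤ s + m := by
    refine le_trans (Finset.card_union_le _ _) ?_
    have h1 := Finset.card_image_le (s := (Finset.range s).attach) (f := SC)
    have h2 := Finset.card_image_le (s := (Finset.Icc 1 m).attach) (f := SE)
    simp only [Finset.card_attach, Finset.card_range, Nat.card_Icc] at h1 h2
    omega
  have hle : (DCell (N+2) m).structConn (_root_.starGraph t) ≤ F.card := Nat.sInf_le hFmem
  have hgoal : (N + 2 - 1 + t) / (1 + t) = s := by rw [hs, show N + 2 - 1 + t = N + 1 + t from by omega]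
  calc (DCell (N+2) m).structConn (_root_.starGraph t) ≤ F.card := hle
    _ ≤ s + m := hcard
    _ = (N + 2 - 1 + t) / (1 + t) + m := by rw [hgoal]
end

section
/- For all integers m ≥ 0, n ≥ 2 and s with 3 ≤ s ≤ n − 1, the K_s-structure connectivity of the DCell network satisfies κ(D_{m,n}; K_s) ≤ ⌈(n−1)/s⌉ + m. -/
open SimpleGraph

/-! ### auxiliary definitions -/

lemma tcell_pos {n : ℕ} (hn : 0 < n) : ∀ m, 0 < tcell n m
  | 0 => hn
  | m+1 => Nat.mul_pos (tcell_pos hn m) (Nat.succ_pos _)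

def zv (n : ℕ) (hn : 0 < n) : (m : ℕ) → DCellVertex n m
  | 0 => ⟨0, hn⟩
  | m+1 => ((0 : Fin (tcell n m + 1)), zv n hn m)

def wl (n : ℕ) : (m : ℕ) → DCellVertex n m → Fin n → DCellVertex n m
  | 0, _, c => c
  | m+1, v, c => (v.1, wl n m v.2 c)

def c0 (n : ℕ) : (m : ℕ) → DCellVertex n m → Fin n
  | 0, v => v
  | m+1, v => c0 n m v.2

lemma c0_wl (n : ℕ) : ∀ (m : ℕ) (v : DCellVertex n m) (c : Fin n), c0 n m (wl n m v c) = c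
  | 0, _, _ => rfl
  | m+1, v, c => c0_wl n m v.2 c

lemma wl_inj {n m : ℕ} (v : DCellVertex n m) : Function.Injective (wl n m v) := by
  intro c d h
  have h2 := congrArg (c0 n m) h
  rwa [c0_wl, c0_wl] at h2

lemma wl_zv (n : ℕ) (hn : 0 < n) : ∀ m, wl n m (zv n hn m) ⟨0, hn⟩ = zv n hn m
  | 0 => rfl
  | m+1 => congrArg (Prod.mk _) (wl_zv n hn m)

lemma code_zv (n : ℕ) (hn : 0 < n) : ∀ m, DCellCode n m (zv n hn m) = 0
  | 0 => rfl
  | m+1 => by simp [DCellCode, zv, code_zv n hn m]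

lemma eq_zv_of_code (n : ℕ) (hn : 0 < n) :
    ∀ (m : ℕ) (x : DCellVertex n m), DCellCode n m x = 0 → x = zv n hn m
  | 0, x, h => Fin.ext h
  | m+1, x, h => by
    obtain ⟨a, b⟩ := x
    have ht := tcell_pos hn m
    simp only [DCellCode] at h
    have hb : DCellCode n m b = 0 := by omega
    have ha : (a : ℕ) * tcell n m = 0 := by omega
    have ha' : (a : ℕ) = 0 := by
      rcases Nat.mul_eq_zero.1 ha with h' | h'
      · exact h'
      · omega
    show (a, b) = ((0 : Fin (tcell n m + 1)), zv n hn m)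
    rw [eq_zv_of_code n hn m b hb]
    exact congrArg (fun t => (t, zv n hn m)) (Fin.ext ha')

def v1 (n : ℕ) (hn : 0 < n) : (m i : ℕ) → DCellVertex n m
  | 0, _ => ⟨0, hn⟩
  | m+1, 0 => (⟨1, Nat.succ_lt_succ (tcell_pos hn m)⟩, zv n hn m)
  | m+1, i+1 => ((0 : Fin (tcell n m + 1)), v1 n hn m i)

lemma wl_v1 (n : ℕ) (hn : 0 < n) : ∀ m i, wl n m (v1 n hn m i) ⟨0, hn⟩ = v1 n hn m i
  | 0, _ => rfl
  | m+1, 0 => congrArg (Prod.mk _) (wl_zv n hn m)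
  | m+1, i+1 => congrArg (Prod.mk _) (wl_v1 n hn m i)

lemma wl_v1_ne (n : ℕ) (hn : 0 < n) :
    ∀ m i, i < m → ∀ c : Fin n, wl n m (v1 n hn m i) c ≠ zv n hn m
  | m+1, 0, _, c => fun h => by
      have h1 := congrArg Prod.fst h
      simp only [wl, v1, zv] at h1
      exact absurd (congrArg Fin.val h1) (by simp)
  | m+1, i+1, hi, c => fun h =>
      wl_v1_ne n hn m i (Nat.lt_of_succ_lt_succ hi) c (congrArg Prod.snd h)

lemma adj_wl (n : ℕ) : ∀ (m : ℕ) (v : DCellVertex n m) (c d : Fin n), c ≠ d →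
    (DCell n m).Adj (wl n m v c) (wl n m v d)
  | 0, _, c, d, h => h
  | m+1, v, c, d, h => by
    have hadj := adj_wl n m v.2 c d h
    have hne : wl n m v.2 c ≠ wl n m v.2 d := fun he => h (wl_inj v.2 he)
    show (SimpleGraph.fromRel _).Adj (v.1, wl n m v.2 c) (v.1, wl n m v.2 d)
    refine (SimpleGraph.fromRel_adj ..).2 ?_
    exact ⟨fun he => hne (congrArg Prod.snd he), Or.inl (Or.inl ⟨rfl, hadj⟩)⟩

lemma adj_zv (n : ℕ) (hn : 0 < n) : ∀ (m : ℕ) (x : DCellVertex n m),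
    (DCell n m).Adj (zv n hn m) x →
    (∃ c : Fin n, (c : ℕ) ≠ 0 ∧ x = wl n m (zv n hn m) c) ∨ ∃ i, i < m ∧ x = v1 n hn m i := by
  intro m
  induction m with
  | zero =>
    intro x hx
    left
    have hne : zv n hn 0 ≠ x := hx.ne
    exact ⟨x, fun h0 => hne (Fin.ext h0.symm), rfl⟩
  | succ m ih =>
    intro x hx
    obtain ⟨a, b⟩ := x
    rw [show DCell n (m+1) = SimpleGraph.fromRel _ from rfl] at hx
    replace hx := (SimpleGraph.fromRel_adj ..).1 hx
    obtain ⟨hne, hr⟩ := hx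
    simp only [zv] at hr
    rcases hr with (⟨h1, h2⟩ | ⟨h1, h2, h3⟩) | (⟨h1, h2⟩ | ⟨h1, h2, h3⟩)
    · rcases ih b h2 with ⟨c, hc, rfl⟩ | ⟨i, hi, rfl⟩
      · left
        exact ⟨c, hc, by rw [← h1]; rfl⟩
      · right
        exact ⟨i+1, Nat.succ_lt_succ hi, by rw [← h1]; rfl⟩
    · right
      refine ⟨0, Nat.succ_pos m, ?_⟩
      rw [code_zv n hn m] at h3
      have hb : b = zv n hn m := eq_zv_of_code n hn m b h2.symm
      show (a, b) = (⟨1, _⟩, zv n hn m)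
      rw [hb]
      exact congrArg (fun t => (t, zv n hn m)) (Fin.ext h3)
    · rcases ih b (h2.symm) with ⟨c, hc, rfl⟩ | ⟨i, hi, rfl⟩
      · left
        exact ⟨c, hc, by rw [h1]; rfl⟩
      · right
        exact ⟨i+1, Nat.succ_lt_succ hi, by rw [h1]; rfl⟩
    · simp at h1

def cliqueSubgraph {V : Type*} (G : SimpleGraph V) (S : Set V)
    (h : ∀ u ∈ S, ∀ v ∈ S, u ≠ v → G.Adj u v) : G.Subgraph where
  verts := S
  Adj u v := u ∈ S ∧ v ∈ S ∧ u ≠ v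
  adj_sub := fun ⟨hu, hv, hne⟩ => h _ hu _ hv hne
  edge_vert := fun ⟨hu, _, _⟩ => hu
  symm := ⟨fun _ _ ⟨hu, hv, hne⟩ => ⟨hv, hu, hne.symm⟩⟩

lemma cliqueSubgraph_iso {V : Type*} (G : SimpleGraph V) (S : Set V)
    (h : ∀ u ∈ S, ∀ v ∈ S, u ≠ v → G.Adj u v) {s : ℕ} (e : S ≃ Fin s) :
    Nonempty ((cliqueSubgraph G S h).coe ≃g (⊤ : SimpleGraph (Fin s))) := by
  refine ⟨⟨e, ?_⟩⟩
  intro a b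
  show (e a ≠ e b) ↔ (a.val ∈ S ∧ b.val ∈ S ∧ a.val ≠ b.val)
  constructor
  · intro hne
    exact ⟨a.2, b.2, fun hh => hne (congrArg e (Subtype.ext hh))⟩
  · rintro ⟨_, _, hne⟩ he
    exact hne (congrArg Subtype.val (e.injective he))


def cliqueOn (n m : ℕ) (v : DCellVertex n m) (Bs : Finset (Fin n)) : (DCell n m).Subgraph :=
  cliqueSubgraph (DCell n m) (wl n m v '' ↑Bs) (by
    rintro _ ⟨c, hc, rfl⟩ _ ⟨d, hd, rfl⟩ hne
    exact adj_wl n m v c d (fun h => hne (by rw [h])))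

lemma cliqueOn_iso (n m : ℕ) {s : ℕ} (v : DCellVertex n m) (Bs : Finset (Fin n))
    (hB : Bs.card = s) :
    Nonempty ((cliqueOn n m v Bs).coe ≃g (⊤ : SimpleGraph (Fin s))) := by
  refine cliqueSubgraph_iso _ _ _ ?_
  exact ((Equiv.Set.imageOfInjOn _ _ ((wl_inj v).injOn)).symm.trans
    ((Equiv.subtypeEquivRight (fun x => Finset.mem_coe)).trans (Bs.equivFinOfCardEq hB)))

def Acl (n s : ℕ) (hsn : s + 1 ≤ n) (j : ℕ) : Finset (Fin n) :=
  Finset.attachFin (Finset.Ioc (min (j*s) (n-1-s)) (min (j*s) (n-1-s) + s))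
    (fun x hx => by
      rw [Finset.mem_Ioc] at hx
      have := min_le_right (j*s) (n-1-s)
      omega)

def Bcl (n s : ℕ) (hsn : s + 1 ≤ n) : Finset (Fin n) :=
  Finset.attachFin (Finset.range s) (fun x hx => by rw [Finset.mem_range] at hx; omega)

def fc (n m s : ℕ) (hsn : s + 1 ≤ n) (j : ℕ) : (DCell n m).Subgraph :=
  if j < (n + s - 2)/s then
    cliqueOn n m (zv n (by omega) m) (Acl n s hsn j)
  else
    cliqueOn n m (v1 n (by omega) m (j - (n + s - 2)/s)) (Bcl n s hsn)

lemma fc_iso (n m s : ℕ) (hsn : s + 1 ≤ n) (hs0 : 0 < s) (j : ℕ) :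
    Nonempty ((fc n m s hsn j).coe ≃g (⊤ : SimpleGraph (Fin s))) := by
  rw [fc]
  by_cases h : j < (n + s - 2)/s
  · rw [if_pos h]
    refine cliqueOn_iso _ _ _ _ ?_
    rw [Acl, Finset.card_attachFin, Nat.card_Ioc]
    omega
  · rw [if_neg h]
    refine cliqueOn_iso _ _ _ _ ?_
    rw [Bcl, Finset.card_attachFin, Finset.card_range]

lemma hq_eq (n s : ℕ) (hn : 2 ≤ n) (hs0 : 0 < s) : (n + s - 2)/s = (n-2)/s + 1 := by
  rw [show n + s - 2 = (n-2) + s by omega, Nat.add_div_right _ hs0]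

lemma fc_cover (n m s : ℕ) (hn : 2 ≤ n) (hsn : s + 1 ≤ n) (hs0 : 0 < s) (hn0 : 0 < n) :
    ∀ x, (DCell n m).Adj (zv n hn0 m) x →
    ∃ j, j < (n + s - 2)/s + m ∧ x ∈ (fc n m s hsn j).verts := by
  intro x hx
  have hq := hq_eq n s hn hs0
  rcases adj_zv n hn0 m x hx with ⟨c, hc, rfl⟩ | ⟨i, hi, rfl⟩
  · have hcn : (c : ℕ) < n := c.isLt
    have h1 : ((c:ℕ)-1)/s ≤ (n-2)/s := Nat.div_le_div_right (by omega)
    have hjq : ((c:ℕ)-1)/s < (n + s - 2)/s := by omega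
    refine ⟨((c:ℕ)-1)/s, by omega, ?_⟩
    rw [fc, if_pos hjq]
    refine ⟨c, ?_, rfl⟩
    rw [Acl, Finset.mem_coe, Finset.mem_attachFin, Finset.mem_Ioc]
    have hd : s * (((c:ℕ)-1)/s) + ((c:ℕ)-1) % s = (c:ℕ)-1 := Nat.div_add_mod _ _
    have hm : ((c:ℕ)-1) % s < s := Nat.mod_lt _ hs0
    have hms : (((c:ℕ)-1)/s) * s = s * (((c:ℕ)-1)/s) := Nat.mul_comm _ _
    rcases Nat.le_total ((((c:ℕ)-1)/s) * s) (n-1-s) with h | h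
    · rw [min_eq_left h]; omega
    · rw [min_eq_right h]; omega
  · refine ⟨(n + s - 2)/s + i, by omega, ?_⟩
    rw [fc, if_neg (by omega), Nat.add_sub_cancel_left]
    refine ⟨⟨0, hn0⟩, ?_, wl_v1 n hn0 m i⟩
    rw [Bcl, Finset.mem_coe, Finset.mem_attachFin, Finset.mem_range]
    exact hs0

lemma fc_notmem (n m s : ℕ) (hsn : s + 1 ≤ n) (hn0 : 0 < n) (j : ℕ)
    (hj : j < (n + s - 2)/s + m) :
    zv n hn0 m ∉ (fc n m s hsn j).verts := by
  intro hmem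
  by_cases h : j < (n + s - 2)/s
  · rw [fc, if_pos h] at hmem
    obtain ⟨c, hc, heq⟩ := hmem
    have hc0 : c = ⟨0, hn0⟩ := wl_inj _ (heq.trans (wl_zv n hn0 m).symm)
    rw [Acl, Finset.mem_coe, Finset.mem_attachFin, Finset.mem_Ioc, hc0] at hc
    simp at hc
  · rw [fc, if_neg h] at hmem
    obtain ⟨c, -, heq⟩ := hmem
    exact wl_v1_ne n hn0 m (j - (n + s - 2)/s) (by omega) c heq


/-- For all integers `m ≥ 0`, `n ≥ 2` and `3 ≤ s ≤ n - 1`,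
`κ(D_{m,n}; K_s) ≤ ⌈(n-1)/s⌉ + m`. -/
theorem dcell_complete_structConn_upper (m n s : ℕ) (hn : 2 ≤ n) (hs1 : 3 ≤ s)
    (hs2 : s ≤ n - 1) :
    (DCell n m).structConn (⊤ : SimpleGraph (Fin s)) ≤ (n + s - 2) / s + m := by
  classical
  have hsn : s + 1 ≤ n := by omega
  have hn0 : 0 < n := by omega
  have hs0 : 0 < s := by omega
  set q : ℕ := (n + s - 2) / s with hqdef
  set F : Finset ((DCell n m).Subgraph) :=
    Finset.image (fun j : Fin (q + m) => fc n m s hsn (j : ℕ)) Finset.univ with hF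
  have hcard : F.card ≤ q + m := by
    refine le_trans Finset.card_image_le ?_
    simp
  have hFiso : ∀ A ∈ F, Nonempty (A.coe ≃g (⊤ : SimpleGraph (Fin s))) := by
    intro A hA
    rw [hF, Finset.mem_image] at hA
    obtain ⟨j, -, rfl⟩ := hA
    exact fc_iso n m s hsn hs0 j
  have hz : zv n hn0 m ∈ (SimpleGraph.cutVerts F)ᶜ := by
    intro hmem
    rw [SimpleGraph.cutVerts] at hmem
    obtain ⟨A, hA, hmemA⟩ := Set.mem_iUnion₂.mp hmem
    rw [hF, Finset.mem_image] at hA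
    obtain ⟨j, -, rfl⟩ := hA
    exact fc_notmem n m s hsn hn0 (j : ℕ) j.isLt hmemA
  have hcov : ∀ x, (DCell n m).Adj (zv n hn0 m) x → x ∈ SimpleGraph.cutVerts F := by
    intro x hx
    obtain ⟨j, hj, hmemA⟩ := fc_cover n m s hn hsn hs0 hn0 x hx
    rw [SimpleGraph.cutVerts]
    refine Set.mem_iUnion₂.mpr ⟨fc n m s hsn j, ?_, hmemA⟩
    rw [hF, Finset.mem_image]
    exact ⟨⟨j, hj⟩, Finset.mem_univ _, rfl⟩
  have hcut : (DCell n m).IsSubgraphCut F := by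
    by_cases hss : ((SimpleGraph.cutVerts F)ᶜ : Set (DCellVertex n m)).Subsingleton
    · exact Or.inr hss
    · refine Or.inl ?_
      intro hconn
      rw [Set.not_subsingleton_iff] at hss
      obtain ⟨a, ha, b, hb, hab⟩ := hss
      have hw : ∃ w, w ∈ (SimpleGraph.cutVerts F)ᶜ ∧ w ≠ zv n hn0 m := by
        by_cases hza : a = zv n hn0 m
        · exact ⟨b, hb, fun h => hab (hza.trans h.symm)⟩
        · exact ⟨a, ha, hza⟩
      obtain ⟨w, hwmem, hwne⟩ := hw
      have key : ∀ (x y : ((SimpleGraph.cutVerts F)ᶜ : Set (DCellVertex n m)))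
          (p : ((DCell n m).induce (SimpleGraph.cutVerts F)ᶜ).Walk x y),
          (x : DCellVertex n m) = zv n hn0 m → (y : DCellVertex n m) ≠ zv n hn0 m → False := by
        intro x y p
        induction p with
        | nil => exact fun h1 h2 => h2 h1
        | @cons u v z h p ih =>
          intro h1 _
          have hadj : (DCell n m).Adj u.val v.val := h
          rw [h1] at hadj
          exact v.2 (hcov _ hadj)
      exact (hconn.preconnected ⟨_, hz⟩ ⟨w, hwmem⟩).elim
        (fun p => key _ _ p rfl hwne)
  calc (DCell n m).structConn (⊤ : SimpleGraph (Fin s)) ≤ F.card :=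
        Nat.sInf_le ⟨F, ⟨hcut, hFiso⟩, rfl⟩
    _ ≤ q + m := hcard
end
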